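/- arXiv:2412.16793 — 4 statements merged into one kernel-verified Lean document; each statement's English description precedes it below -/
import Mathlib

section
/- If (c_n) and (d_n) are bounded sequences of natural numbers and d_n = max(c_n, c_{n+1}) for all n, then (c_n) is parity accepting if and only if (d_n) is parity accepting. -/
def InfOften (c : ℕ → ℕ) (v : ℕ) : Prop := ∀ n : ℕ, ∃ m, n ≤ m ∧ c m = v

def MaxInfRec (c : ℕ → ℕ) (v : ℕ) : Prop :=
  InfOften c v ∧ ∀ w, InfOften c w → w ≤ v

def ParityAccepting (c : ℕ → ℕ) : Prop := ∃ v, MaxInfRec c v ∧ Even v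

lemma pigeon (P : ℕ → Prop) (f : ℕ → ℕ) (B : ℕ)
    (hP : ∀ n, ∃ m, n ≤ m ∧ P m) (hf : ∀ m, P m → f m ≤ B) :
    ∃ u, ∀ n, ∃ m, n ≤ m ∧ P m ∧ f m = u := by
  by_contra hcon
  push_neg at hcon
  choose N hN using hcon
  obtain ⟨m, hm, hPm⟩ := hP ((Finset.range (B + 1)).sup N)
  exact hN (f m) m
    (le_trans (Finset.le_sup (Finset.mem_range.mpr (Nat.lt_succ_of_le (hf m hPm)))) hm)
    hPm rfl

lemma infOften_of_max {c d : ℕ → ℕ} (h : ∀ n, d n = max (c n) (c (n + 1)))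
    {w : ℕ} (hw : InfOften d w) : InfOften c w := by
  intro n
  obtain ⟨m, hm, hd⟩ := hw n
  rw [h m] at hd
  rcases max_choice (c m) (c (m + 1)) with hmc | hmc
  · exact ⟨m, hm, hmc ▸ hd⟩
  · exact ⟨m + 1, le_trans hm (Nat.le_succ m), hmc ▸ hd⟩

/-- if `d n = max (c n) (c (n+1))` then `c` is parity accepting
iff `d` is. -/
theorem stmt3 (c d : ℕ → ℕ) (B : ℕ) (hBc : ∀ n, c n ≤ B) (hBd : ∀ n, d n ≤ B)
    (h : ∀ n, d n = max (c n) (c (n + 1))) :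
    ParityAccepting c ↔ ParityAccepting d := by
  constructor
  · rintro ⟨v, ⟨hio, hmax⟩, hev⟩
    refine ⟨v, ⟨?_, ?_⟩, hev⟩
    · -- InfOften d v
      have hfin : ∀ w, ∃ N, ∀ m, N ≤ m → v < w → c m ≠ w := by
        intro w
        by_cases hw : v < w
        · by_contra hc
          push_neg at hc
          have : InfOften c w := by
            intro n
            obtain ⟨m, hm, _, hcm⟩ := hc n
            exact ⟨m, hm, hcm⟩
          exact absurd (hmax w this) (not_le.mpr hw)
        · exact ⟨0, fun m _ hvw => absurd hvw hw⟩
      choose N hN using hfin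
      set M := (Finset.range (B + 1)).sup N with hM
      have hsmall : ∀ m, M ≤ m → c m ≤ v := by
        intro m hm
        by_contra hle
        push_neg at hle
        refine hN (c m) m ?_ hle rfl
        exact le_trans (Finset.le_sup (Finset.mem_range.mpr (Nat.lt_succ_of_le (hBc m)))) hm
      intro n
      obtain ⟨m, hm, hcm⟩ := hio (max n M)
      refine ⟨m, le_trans (le_max_left n M) hm, ?_⟩
      have h1 : c (m + 1) ≤ v :=
        hsmall (m + 1) (le_trans (le_max_right n M) (le_trans hm (Nat.le_succ m)))
      rw [h m, hcm, max_eq_left h1]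
    · intro w hw
      exact hmax w (infOften_of_max h hw)
  · rintro ⟨v, ⟨hio, hmax⟩, hev⟩
    refine ⟨v, ⟨infOften_of_max h hio, ?_⟩, hev⟩
    intro w hw
    obtain ⟨u, hu⟩ := pigeon (fun m => c m = w) d B hw (fun m _ => hBd m)
    have hiu : InfOften d u := fun n => by
      obtain ⟨m, h1, _, h3⟩ := hu n
      exact ⟨m, h1, h3⟩
    obtain ⟨m, _, hcm, hdm⟩ := hu 0
    have hwu : w ≤ u := by
      rw [← hcm, ← hdm, h m]
      exact le_max_left _ _
    exact hwu.trans (hmax u hiu)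
end

section
/- Let t be an infinite binary tree labeled in Σ and let u, v be words with v nonempty. Define t* to be the tree obtained from t by replacing, recursively for all n, the subtree at position u·vⁿ by the subtree of t at position u. Then for every branch b of t* not equal to u·v^ω (past u), the sequence of labels along b in t* eventually coincides with the sequence of labels along some branch of t. -/
def pref (b : ℕ → Bool) (n : ℕ) : List Bool := List.ofFn (fun i : Fin n => b i)

/-- The infinite word `u · v^ω`, as a function `ℕ → Bool`. -/
def uvOmega (u v : List Bool) : ℕ → Bool := fun n =>
  if n < u.length then u.getD n false
  else v.getD ((n - u.length) % v.length) false

lemma pref_length (b : ℕ → Bool) (n : ℕ) : (pref b n).length = n := by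
  simp [pref]

lemma pref_add (b : ℕ → Bool) (a m : ℕ) :
    pref b (a + m) = pref b a ++ List.ofFn (fun j : Fin m => b (a + j)) := by
  simp [pref, List.ofFn_add]

lemma pref_prefix (b : ℕ → Bool) {a m : ℕ} (h : a ≤ m) :
    pref b a <+: pref b m := by
  obtain ⟨d, rfl⟩ := Nat.exists_eq_add_of_le h
  exact ⟨_, (pref_add b a d).symm⟩

lemma prefix_eq_of_length {x y z : List Bool} (hx : x <+: z) (hy : y <+: z)
    (h : x.length = y.length) : x = y :=
  (List.prefix_of_prefix_length_le hx hy (le_of_eq h)).eq_of_length h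

lemma pref_getD (b : ℕ → Bool) {n i : ℕ} (h : i < n) :
    (pref b n).getD i false = b i := by
  rw [List.getD_eq_getElem _ _ (by simpa [pref_length] using h)]
  simp [pref]

lemma flatten_rep_getD (v : List Bool) :
    ∀ n j, j < n * v.length →
      ((List.replicate n v).flatten).getD j false = v.getD (j % v.length) false := by
  intro n
  induction n with
  | zero => intro j hj; simp at hj
  | succ n ih =>
    intro j hj
    rw [List.replicate_succ, List.flatten_cons]
    by_cases h : j < v.length
    · rw [List.getD_append _ _ _ _ h, Nat.mod_eq_of_lt h]
    · push_neg at h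
      rw [List.getD_append_right _ _ _ _ h]
      have h2 : j - v.length < n * v.length := by
        rw [Nat.add_mul, Nat.one_mul] at hj
        omega
      rw [ih _ h2]
      congr 1
      conv_rhs => rw [show j = v.length + (j - v.length) by omega]
      rw [Nat.add_mod_left]

lemma flatten_rep_length (v : List Bool) (n : ℕ) :
    ((List.replicate n v).flatten).length = n * v.length := by
  induction n with
  | zero => simp
  | succ n ih =>
    rw [List.replicate_succ, List.flatten_cons, List.length_append, ih,
      Nat.succ_mul]
    omega

/-- let `t*` be the pumped tree obtained from `t` by recursively
replacing the subtree at `u·vⁿ` by the subtree of `t` at `u` (characterised by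
`h1`, `h2`). Then along every branch `b ≠ u·v^ω`, the label sequence of `t*`
eventually coincides with the label sequence of `t` along some branch. -/
theorem stmt6 (σ : Type) (t tstar : List Bool → σ) (u v : List Bool) (hv : v ≠ [])
    (h1 : ∀ x : List Bool, ¬ (u ++ v) <+: x → tstar x = t x)
    (h2 : ∀ y : List Bool, tstar (u ++ v ++ y) = tstar (u ++ y))
    (b : ℕ → Bool) (hb : b ≠ uvOmega u v) :
    ∃ (b' : ℕ → Bool) (k l : ℕ),
      ∀ m : ℕ, tstar (pref b (k + m)) = t (pref b' (l + m)) := by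
  set L := u.length with hL
  set V := v.length with hVdef
  have hV : 0 < V := List.length_pos_iff.mpr hv
  -- key fact: tstar (u ++ v^n ++ w) = tstar (u ++ w)
  have hC : ∀ n (w : List Bool),
      tstar ((u ++ (List.replicate n v).flatten) ++ w) = tstar (u ++ w) := by
    intro n
    induction n with
    | zero => intro w; simp
    | succ n ih =>
      intro w
      rw [List.replicate_succ, List.flatten_cons]
      have e : (u ++ (v ++ (List.replicate n v).flatten)) ++ w
          = u ++ v ++ ((List.replicate n v).flatten ++ w) := by
        simp [List.append_assoc]
      rw [e, h2, show u ++ ((List.replicate n v).flatten ++ w)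
          = (u ++ (List.replicate n v).flatten) ++ w by simp [List.append_assoc], ih]
  by_cases hcase : pref b (L + V) = u ++ v
  · -- u ++ v is a prefix of b
    set P : ℕ → Prop := fun n => pref b (L + n * V) = u ++ (List.replicate n v).flatten
      with hPdef
    have hP1 : P 1 := by simpa [hPdef] using hcase
    have hmax : ∃ n, P n ∧ ¬ P (n + 1) := by
      by_contra hno
      push_neg at hno
      have hall : ∀ n, P n := by
        intro n
        induction n with
        | zero =>
          -- pref b L = u, follows from P 1
          show pref b (L + 0 * V) = u ++ (List.replicate 0 v).flatten
          simp only [Nat.zero_mul, Nat.add_zero, List.replicate_zero,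
            List.flatten_nil, List.append_nil]
          have h1' : pref b L <+: pref b (L + V) := pref_prefix b (by omega)
          have h2' : u <+: pref b (L + V) := by rw [hcase]; exact ⟨v, rfl⟩
          exact prefix_eq_of_length h1' h2' (by simp [pref_length, hL])
        | succ n ih => exact hno n ih
      apply hb
      funext i
      have hilt : i < L + (i + 1) * V := by
        have : i + 1 ≤ (i + 1) * V := Nat.le_mul_of_pos_right _ hV
        omega
      have := hall (i + 1)
      have hb_i : b i = (u ++ (List.replicate (i + 1) v).flatten).getD i false := by
        rw [← this, pref_getD b hilt]
      rw [hb_i]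
      unfold uvOmega
      by_cases hi : i < L
      · rw [List.getD_append _ _ _ _ (by exact hi), if_pos hi]
      · push_neg at hi
        rw [List.getD_append_right _ _ _ _ hi, if_neg (by omega)]
        exact flatten_rep_getD v (i + 1) (i - L) (by rw [← hVdef]; omega)
    obtain ⟨n₀, hP, hnP⟩ := hmax
    set k := L + n₀ * V with hk
    set c : ℕ → Bool := fun j => b (k + j) with hc
    set b' : ℕ → Bool := fun i => if i < L then b i else b (i + n₀ * V) with hb'
    -- pref b L = u
    have hu : pref b L = u := by
      have h1' : pref b L <+: pref b k := pref_prefix b (by omega)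
      have h2' : u <+: pref b k := by rw [hP]; exact ⟨_, rfl⟩
      exact prefix_eq_of_length h1' h2' (by simp [pref_length, hL])
    -- Claim A
    have hA : ∀ m, pref b (k + m)
        = (u ++ (List.replicate n₀ v).flatten) ++ pref c m := by
      intro m
      rw [pref_add, hP]
      rfl
    -- Claim B
    have hB : ∀ m, pref b' (L + m) = u ++ pref c m := by
      intro m
      rw [pref_add]
      congr 1
      · rw [← hu]
        unfold pref
        congr 1
        funext i
        exact if_pos i.isLt
      · unfold pref
        congr 1
        funext j
        show b' (L + (j : ℕ)) = c j
        rw [hb']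
        simp only
        rw [if_neg (by omega)]
        congr 1
        omega
    refine ⟨b', k, L, fun m => ?_⟩
    rw [hA m, hC, hB m]
    apply h1
    rw [List.prefix_append_right_inj]
    intro hvc
    apply hnP
    have hVm : V ≤ m := by simpa [pref_length] using hvc.length_le
    have hcv : pref c V = v :=
      prefix_eq_of_length (pref_prefix c hVm) hvc (by simp [pref_length, hVdef])
    show pref b (L + (n₀ + 1) * V) = u ++ (List.replicate (n₀ + 1) v).flatten
    have e1 : L + (n₀ + 1) * V = k + V := by rw [hk]; ring
    rw [e1, hA V, hcv, List.replicate_succ', List.flatten_append]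
    simp [List.append_assoc]
  · -- u ++ v is not a prefix of b: tstar and t agree everywhere on b
    refine ⟨b, 0, 0, fun m => ?_⟩
    simp only [Nat.zero_add]
    apply h1
    intro hpre
    apply hcase
    have hlen : L + V ≤ m := by
      have := hpre.length_le
      simpa [pref_length] using this
    exact prefix_eq_of_length (pref_prefix b hlen) hpre (by simp [pref_length, hL, hVdef])
end

section
/- Let A and B be nondeterministic parity tree automata over alphabet Σ, t a Σ-tree, ρ_A and ρ_B accepting runs of A and B on t, where ρ_A is obtained from ρ_B by a guiding function g that preserves acceptance. If u ∈ {0,1}*, v ∈ {0,1}⁺ satisfy ρ_A(u) = ρ_A(u·v) and ρ_B(u) = ρ_B(u·v), and the greatest priority encountered between positions u and u·v in ρ_B is even, then the greatest priority encountered on that segment in ρ_A is also even. -/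
/-- A nondeterministic parity tree automaton over the alphabet `A`, with
priorities (on the two child edges of each transition) in the index
`[pmin, pmax]`. -/
structure NPA (A : Type) where
  Q : Type
  fin : Fintype Q
  init : Q
  delta : Set (Q × A × Q × Q)
  prio : (Q × A × Q × Q) → Bool → ℕ
  pmin : ℕ
  pmax : ℕ
  prio_mem : ∀ d b, prio d b ∈ Finset.Icc pmin pmax

attribute [instance] NPA.fin

/-- A run of the automaton `M` on the tree `t`, given as a transition-labeled
tree consistent with `t`. -/
def IsRun {A : Type} (M : NPA A) (t : List Bool → A)
    (ρ : List Bool → M.Q × A × M.Q × M.Q) : Prop :=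
  (ρ []).1 = M.init ∧
  ∀ w : List Bool, ρ w ∈ M.delta ∧ (ρ w).2.1 = t w ∧
    ∀ dir : Bool, (ρ (w ++ [dir])).1 = (if dir then (ρ w).2.2.2 else (ρ w).2.2.1)

/-- The priority sequence of a run along the branch `b`. -/
def BranchPrio {A : Type} (M : NPA A) (ρ : List Bool → M.Q × A × M.Q × M.Q)
    (b : ℕ → Bool) : ℕ → ℕ := fun n => M.prio (ρ (pref b n)) (b n)

/-- A run is accepting if the priority sequence of every branch is parity
accepting. -/
def AcceptingRun {A : Type} (M : NPA A) (ρ : List Bool → M.Q × A × M.Q × M.Q) : Prop :=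
  ∀ b : ℕ → Bool, ParityAccepting (BranchPrio M ρ b)

/-- The language of the automaton `M`. -/
def Lang {A : Type} (M : NPA A) : Set (List Bool → A) :=
  {t | ∃ ρ, IsRun M t ρ ∧ AcceptingRun M ρ}

/-- `g` is a guiding function from `B` to `M`: it is compatible with the
given state and letter, and produces transitions of `M`. -/
def GuidingCompat {A : Type} (M B : NPA A)
    (g : M.Q × (B.Q × A × B.Q × B.Q) → M.Q × A × M.Q × M.Q) : Prop :=
  ∀ p d, (g (p, d)).1 = p ∧ (g (p, d)).2.1 = d.2.1 ∧ g (p, d) ∈ M.delta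

/-- `ρA` is the run guided by `ρB` via `g`. -/
def Guided {A : Type} {M B : NPA A}
    (g : M.Q × (B.Q × A × B.Q × B.Q) → M.Q × A × M.Q × M.Q)
    (ρB : List Bool → B.Q × A × B.Q × B.Q)
    (ρA : List Bool → M.Q × A × M.Q × M.Q) : Prop :=
  ∀ w : List Bool, ρA w = g ((ρA w).1, ρB w)

/-- The guiding function `g` preserves acceptance. -/
def PreservesAcceptance {A : Type} (M B : NPA A)
    (g : M.Q × (B.Q × A × B.Q × B.Q) → M.Q × A × M.Q × M.Q) : Prop :=
  ∀ (t : List Bool → A) ρB ρA, IsRun B t ρB → AcceptingRun B ρB →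
    IsRun M t ρA → Guided g ρB ρA → AcceptingRun M ρA

/-- `M` is guidable: every automaton with the same language admits an
acceptance-preserving guiding function to `M`. -/
def Guidable {A : Type} (M : NPA A) : Prop :=
  ∀ B : NPA A, Lang B = Lang M →
    ∃ g, GuidingCompat M B g ∧ PreservesAcceptance M B g


def collapse (u v : List Bool) (w : List Bool) : List Bool :=
  if h : v ≠ [] ∧ (u ++ v) <+: w then
    collapse u v (u ++ w.drop (u.length + v.length))
  else w
termination_by w.length
decreasing_by
  · have hlen : u.length + v.length ≤ w.length := by
      simpa using h.2.length_le
    have hv : 0 < v.length := List.length_pos_iff.mpr h.1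
    simp only [List.length_append, List.length_drop]
    omega

theorem collapse_of_not_prefix {u v w : List Bool} (h : ¬ (u ++ v) <+: w) :
    collapse u v w = w := by
  rw [collapse]; simp [h]

theorem collapse_unfold_pos {u v w : List Bool} (hv : v ≠ []) (h : (u ++ v) <+: w) :
    collapse u v w = collapse u v (u ++ w.drop (u.length + v.length)) := by
  rw [collapse]; simp [hv, h]

theorem collapse_pump {u v : List Bool} (hv : v ≠ []) (x : List Bool) :
    collapse u v (u ++ v ++ x) = collapse u v (u ++ x) := by
  have hpre : (u ++ v) <+: (u ++ v ++ x) := by simp [List.prefix_append]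
  rw [collapse_unfold_pos hv hpre]
  have hdrop : (u ++ v ++ x).drop (u.length + v.length) = x := by
    have := List.drop_left (l₁ := u ++ v) (l₂ := x)
    simpa using this
  rw [hdrop]

theorem collapse_not_prefix {u v : List Bool} (hv : v ≠ []) (w : List Bool) :
    ¬ (u ++ v) <+: collapse u v w := by
  induction w using collapse.induct u v with
  | case1 w h ih => rw [collapse_unfold_pos hv h.2]; exact ih
  | case2 w h =>
    have hp : ¬ (u ++ v) <+: w := fun hc => h ⟨hv, hc⟩
    rw [collapse_of_not_prefix hp]; exact hp

theorem collapse_append {u v : List Bool} (hv : v ≠ []) (x : List Bool) (w : List Bool) :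
    collapse u v (w ++ x) = collapse u v (collapse u v w ++ x) := by
  induction w using collapse.induct u v with
  | case1 w h ih =>
    obtain ⟨y, hy⟩ := h.2
    subst hy
    rw [collapse_unfold_pos hv h.2]
    have hdrop : (u ++ v ++ y).drop (u.length + v.length) = y := by
      have := List.drop_left (l₁ := u ++ v) (l₂ := y)
      simpa using this
    rw [hdrop] at ih ⊢
    have h1 : (u ++ v ++ y) ++ x = u ++ v ++ (y ++ x) := by simp
    rw [h1, collapse_pump hv, ← List.append_assoc]
    exact ih
  | case2 w h =>
    have hp : ¬ (u ++ v) <+: w := fun hc => h ⟨hv, hc⟩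
    rw [collapse_of_not_prefix hp]

theorem collapse_short {u v w : List Bool} (hlen : w.length < u.length + v.length) :
    collapse u v w = w := by
  apply collapse_of_not_prefix
  intro hc
  have := hc.length_le
  simp at this
  omega

theorem collapse_step {u v : List Bool} (hv : v ≠ []) (w : List Bool) (d : Bool) :
    collapse u v (w ++ [d]) = collapse u v w ++ [d] ∨
      (collapse u v w ++ [d] = u ++ v ∧ collapse u v (w ++ [d]) = u) := by
  rw [collapse_append hv [d] w]
  by_cases h : (u ++ v) <+: collapse u v w ++ [d]
  · right
    have hnp := collapse_not_prefix hv (u := u) (v := v) w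
    have hlen : (u ++ v).length ≤ (collapse u v w).length + 1 := by
      simpa using h.length_le
    have hlt : ¬ (u ++ v).length ≤ (collapse u v w).length := by
      intro hle
      exact hnp (List.prefix_of_prefix_length_le h (List.prefix_append _ _) (by simpa using hle))
    have heq : (u ++ v) = collapse u v w ++ [d] := by
      apply List.IsPrefix.eq_of_length h
      simp at hlen hlt ⊢
      omega
    refine ⟨heq.symm, ?_⟩
    rw [← heq]
    have : u ++ v = u ++ v ++ [] := by simp
    rw [this, collapse_pump hv]
    simp only [List.append_nil]
    have hl2 : u.length < u.length + v.length := by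
      have := List.length_pos_iff.mpr hv; omega
    exact collapse_short (u := u) (v := v) (w := u) hl2
  · left
    exact collapse_of_not_prefix h

theorem take_succ_getD {v : List Bool} {j : ℕ} (hj : j < v.length) :
    v.take (j + 1) = v.take j ++ [v.getD j false] := by
  rw [List.take_succ]
  congr 1
  rw [List.getD_eq_getElem v false hj]
  simp [List.getElem?_eq_getElem hj]

theorem collapse_cycle_step {u v : List Bool} (hv : v ≠ []) {j : ℕ} (hj : j < v.length) :
    collapse u v ((u ++ v.take j) ++ [v.getD j false]) = u ++ v.take ((j + 1) % v.length) := by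
  have h1 : (u ++ v.take j) ++ [v.getD j false] = u ++ v.take (j + 1) := by
    rw [List.append_assoc, ← take_succ_getD hj]
  rw [h1]
  by_cases h : j + 1 < v.length
  · have hl : (u ++ v.take (j+1)).length < u.length + v.length := by
      simp [List.length_take]
      omega
    rw [collapse_short hl, Nat.mod_eq_of_lt h]
  · have hjm : j + 1 = v.length := by omega
    rw [hjm, List.take_length, Nat.mod_self]
    have : u ++ v = u ++ v ++ [] := by simp
    rw [this, collapse_pump hv]
    simp only [List.append_nil]
    have hl2 : u.length < u.length + v.length := by
      have := List.length_pos_iff.mpr hv; omega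
    rw [show u ++ List.take 0 v = u by simp]
    exact collapse_short (u := u) (v := v) (w := u) hl2


theorem infOften_shift {c c' : ℕ → ℕ} {k l : ℕ} (h : ∀ j, c (k + j) = c' (l + j))
    {x : ℕ} (hx : InfOften c' x) : InfOften c x := by
  intro n
  obtain ⟨m, hm, hcm⟩ := hx (l + n)
  refine ⟨k + (m - l), by omega, ?_⟩
  rw [h (m - l), show l + (m - l) = m by omega]
  exact hcm

theorem parity_shift {c c' : ℕ → ℕ} {k l : ℕ} (h : ∀ j, c (k + j) = c' (l + j))
    (hacc : ParityAccepting c') : ParityAccepting c := by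
  obtain ⟨V, ⟨hio, hmax⟩, hev⟩ := hacc
  refine ⟨V, ⟨infOften_shift h hio, ?_⟩, hev⟩
  intro w hw
  exact hmax w (infOften_shift (c := c') (c' := c) (k := l) (l := k) (fun j => (h j).symm) hw)

theorem maxInfRec_unique {c : ℕ → ℕ} {a b : ℕ} (ha : MaxInfRec c a) (hb : MaxInfRec c b) :
    a = b :=
  le_antisymm (hb.2 a ha.1) (ha.2 b hb.1)

theorem maxInfRec_periodic (P : ℕ → ℕ) (m : ℕ) (hm : 0 < m) :
    MaxInfRec (fun i => P (i % m)) ((Finset.range m).sup P) := by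
  constructor
  · obtain ⟨j, hj, hjsup⟩ := Finset.exists_mem_eq_sup (Finset.range m)
      (Finset.nonempty_range_iff.mpr (by omega)) P
    rw [Finset.mem_range] at hj
    intro n
    refine ⟨n * m + j, by nlinarith, ?_⟩
    simp only
    rw [show n * m + j = j + n * m by ring, Nat.add_mul_mod_self_right,
      Nat.mod_eq_of_lt hj, hjsup]
  · intro w hw
    obtain ⟨i, _, hci⟩ := hw 0
    simp only at hci
    rw [← hci]
    exact Finset.le_sup (Finset.mem_range.mpr (Nat.mod_lt i hm))

theorem pref_succ (b : ℕ → Bool) (n : ℕ) : pref b (n + 1) = pref b n ++ [b n] := by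
  rw [pref, List.ofFn_succ']
  simp [pref, List.concat_eq_append]

theorem pref_eq_of {l : List Bool} {b : ℕ → Bool}
    (h : ∀ i, (hi : i < l.length) → b i = l[i]) : pref b l.length = l := by
  apply List.ext_getElem
  · simp [pref]
  · intro i h1 h2
    simp [pref]
    exact h i h2


theorem mod_succ_mod (i m : ℕ) : (i % m + 1) % m = (i + 1) % m := by
  conv_rhs => rw [Nat.add_mod]
  rw [Nat.add_mod (i % m) 1 m, Nat.mod_mod_of_dvd i dvd_rfl]

theorem collapse_nil {u v : List Bool} (hv : v ≠ []) :
    collapse u v [] = [] := by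
  apply collapse_of_not_prefix
  intro hc
  have h1 := hc.length_le
  have h2 : 0 < v.length := List.length_pos_iff.mpr hv
  simp only [List.length_append, List.length_nil] at h1
  omega

theorem collapse_u {u v : List Bool} (hv : v ≠ []) : collapse u v u = u := by
  have h2 : 0 < v.length := List.length_pos_iff.mpr hv
  have hl : u.length < u.length + v.length := by omega
  exact collapse_short (u := u) (v := v) (w := u) hl

theorem isRun_collapse {A : Type} (M : NPA A) (t : List Bool → A)
    (ρ : List Bool → M.Q × A × M.Q × M.Q) (hR : IsRun M t ρ)
    {u v : List Bool} (hv : v ≠ []) (hfix : ρ u = ρ (u ++ v)) :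
    IsRun M (fun w => t (collapse u v w)) (fun w => ρ (collapse u v w)) := by
  obtain ⟨hinit, hcons⟩ := hR
  constructor
  · simp only [collapse_nil hv]
    exact hinit
  · intro w
    refine ⟨(hcons _).1, (hcons _).2.1, ?_⟩
    intro dir
    simp only
    rcases collapse_step hv w dir with hstep | ⟨h1, h2⟩
    · rw [hstep]
      exact (hcons (collapse u v w)).2.2 dir
    · have hthis := (hcons (collapse u v w)).2.2 dir
      rw [h1] at hthis
      rw [h2, hfix]
      exact hthis

theorem accepting_collapse {A : Type} (N : NPA A)
    (ρ : List Bool → N.Q × A × N.Q × N.Q) (hacc : AcceptingRun N ρ)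
    {u v : List Bool} (hv : v ≠ []) (hfix : ρ u = ρ (u ++ v))
    (hEven : Even ((Finset.range v.length).sup
      (fun k => N.prio (ρ (u ++ v.take k)) (v.getD k false)))) :
    AcceptingRun N (fun w => ρ (collapse u v w)) := by
  intro b
  set m := v.length with hmdef
  have hm : 0 < m := List.length_pos_iff.mpr hv
  set W : ℕ → List Bool := fun n => collapse u v (pref b n) with hWdef
  have hdich : ∀ n, W (n + 1) = W n ++ [b n] ∨
      (W n ++ [b n] = u ++ v ∧ W (n + 1) = u) := by
    intro n
    have : W (n + 1) = collapse u v (pref b n ++ [b n]) := by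
      rw [hWdef]; simp only; rw [pref_succ]
    rw [this]
    exact collapse_step hv (pref b n) (b n)
  have hnp : ∀ n, ¬ (u ++ v) <+: W n := fun n => collapse_not_prefix hv _
  have hBP : ∀ n, BranchPrio N (fun w => ρ (collapse u v w)) b n
      = N.prio (ρ (W n)) (b n) := fun n => rfl
  by_cases hc : ∀ N₀ : ℕ, ∃ n, N₀ ≤ n ∧ W (n + 1) ≠ W n ++ [b n]
  · -- infinitely many resets
    have hpre : ∀ n, W n <+: u ++ v := by
      intro n
      by_contra hnpfx
      have hpers : ∀ k, ¬ W (n + k) <+: u ++ v := by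
        intro k
        induction k with
        | zero => simpa using hnpfx
        | succ k ih =>
          rcases hdich (n + k) with h | ⟨h1, _⟩
          · rw [show n + (k + 1) = n + k + 1 by ring, h]
            intro hpp
            exact ih ((List.prefix_append _ _).trans hpp)
          · exact absurd (h1 ▸ List.prefix_append (W (n + k)) [b (n + k)]) ih
      obtain ⟨n', hn', hres⟩ := hc n
      rcases hdich n' with h | ⟨h1, _⟩
      · exact hres h
      · refine hpers (n' - n) ?_
        rw [show n + (n' - n) = n' by omega]
        exact h1 ▸ List.prefix_append (W n') [b n']
    obtain ⟨N₀, _, hres0⟩ := hc 0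
    have hresW : W (N₀ + 1) = u := ((hdich N₀).resolve_left hres0).2
    -- step analysis
    have hstep2 : ∀ n, ∀ j < m, W n = u ++ v.take j →
        W (n + 1) = u ++ v.take ((j + 1) % m) ∧ b n = v.getD j false := by
      intro n j hj hWn
      have htake : v.take (j + 1) = v.take j ++ [v.getD j false] := take_succ_getD hj
      rcases hdich n with h | ⟨h1, h2⟩
      · -- append case
        have hlen1 : (W (n + 1)).length = u.length + j + 1 := by
          rw [h, hWn]
          simp [List.length_take]
          omega
        have hp := hpre (n + 1)
        have hle : u.length + j + 1 ≤ u.length + m := by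
          have := hp.length_le
          simp [hlen1] at this ⊢
          omega
        have hjm : j + 1 < m := by
          rcases Nat.lt_or_ge (j + 1) m with h' | h'
          · exact h'
          · exfalso
            have hjeq : j + 1 = m := by omega
            have : (W (n + 1)).length = (u ++ v).length := by
              simp [hlen1, hjeq]
              omega
            exact hnp (n + 1) (List.IsPrefix.eq_of_length hp this ▸ List.prefix_refl _)
        have hWn1 : W (n + 1) = u ++ v.take (j + 1) := by
          have := List.prefix_iff_eq_take.mp hp
          rw [this, hlen1, show u.length + j + 1 = u.length + (j + 1) by ring,
            List.take_length_add_append]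
        constructor
        · rw [hWn1, Nat.mod_eq_of_lt hjm]
        · have := hWn1
          rw [h, hWn, htake] at this
          simp only [List.append_assoc] at this
          have := List.append_cancel_left this
          have := List.append_cancel_left this
          simpa using this
      · -- reset case
        have hlen1 : u.length + j + 1 = u.length + m := by
          have := congrArg List.length h1
          rw [hWn] at this
          simp [List.length_take] at this
          omega
        have hjeq : j + 1 = m := by omega
        constructor
        · rw [h2, hjeq, Nat.mod_self]
          simp
        · have h3 : u ++ v.take j ++ [b n] = u ++ (v.take j ++ [v.getD j false]) := by
            rw [← htake, hjeq, List.take_length, ← hWn, h1]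
          rw [List.append_assoc] at h3
          have := List.append_cancel_left h3
          have := List.append_cancel_left this
          simpa using this
    have hW : ∀ i, W (N₀ + 1 + i) = u ++ v.take (i % m) := by
      intro i
      induction i with
      | zero => rw [hresW]; simp
      | succ i ih =>
        have := (hstep2 (N₀ + 1 + i) (i % m) (Nat.mod_lt i hm) ih).1
        rw [show N₀ + 1 + (i + 1) = N₀ + 1 + i + 1 by ring, this, mod_succ_mod]
    have hb : ∀ i, b (N₀ + 1 + i) = v.getD (i % m) false := by
      intro i
      exact (hstep2 (N₀ + 1 + i) (i % m) (Nat.mod_lt i hm) (hW i)).2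
    apply parity_shift (c' := fun i => N.prio (ρ (u ++ v.take (i % m))) (v.getD (i % m) false))
      (k := N₀ + 1) (l := 0)
    · intro j
      rw [hBP, hW j, hb j]
      simp
    · exact ⟨_, maxInfRec_periodic (fun j => N.prio (ρ (u ++ v.take j)) (v.getD j false)) m hm,
        hEven⟩
  · -- eventually no resets
    push_neg at hc
    obtain ⟨N₀, hstraight⟩ := hc
    set L := (W N₀).length with hLdef
    set b'' : ℕ → Bool := fun i => if h : i < L then (W N₀)[i] else b (N₀ + (i - L)) with hb''
    have hpref : ∀ j, pref b'' (L + j) = W (N₀ + j) := by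
      intro j
      induction j with
      | zero =>
        simp only [Nat.add_zero]
        apply pref_eq_of
        intro i hi
        rw [hb'']
        simp [show i < L from hi]
      | succ j ih =>
        rw [show L + (j + 1) = (L + j) + 1 by ring, pref_succ, ih]
        have hbj : b'' (L + j) = b (N₀ + j) := by
          rw [hb'']
          simp
        rw [hbj, show N₀ + (j + 1) = N₀ + j + 1 by ring]
        exact (hstraight (N₀ + j) (by omega)).symm
    apply parity_shift (c' := BranchPrio N ρ b'') (k := N₀) (l := L)
    · intro j
      rw [hBP, BranchPrio, hpref j]
      congr 1
      rw [hb'']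
      simp
    · exact hacc b''

/-- Lemma 2 of the paper: for accepting runs `ρA` guided by `ρB`
via an acceptance-preserving guiding function, if `ρA(u) = ρA(u·v)` and
`ρB(u) = ρB(u·v)` and the greatest priority of `ρB` on the segment from `u`
to `u·v` is even, then so is the greatest priority of `ρA` on that segment. -/
theorem stmt8 (A : Type) (M B : NPA A) (t : List Bool → A)
    (ρA : List Bool → M.Q × A × M.Q × M.Q)
    (ρB : List Bool → B.Q × A × B.Q × B.Q)
    (hRA : IsRun M t ρA) (haccA : AcceptingRun M ρA)
    (hRB : IsRun B t ρB) (haccB : AcceptingRun B ρB)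
    (g : M.Q × (B.Q × A × B.Q × B.Q) → M.Q × A × M.Q × M.Q)
    (hg : GuidingCompat M B g) (hpres : PreservesAcceptance M B g)
    (hguided : Guided g ρB ρA)
    (u v : List Bool) (hv : v ≠ [])
    (hA : ρA u = ρA (u ++ v)) (hB : ρB u = ρB (u ++ v))
    (hBeven : Even ((Finset.range v.length).sup
      (fun k => B.prio (ρB (u ++ v.take k)) (v.getD k false)))) :
    Even ((Finset.range v.length).sup
      (fun k => M.prio (ρA (u ++ v.take k)) (v.getD k false))) := by
  have hm : 0 < v.length := List.length_pos_iff.mpr hv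
  have hRA' := isRun_collapse M t ρA hRA hv hA
  have hRB' := isRun_collapse B t ρB hRB hv hB
  have hguided' : Guided g (fun w => ρB (collapse u v w)) (fun w => ρA (collapse u v w)) :=
    fun w => hguided (collapse u v w)
  have haccB' := accepting_collapse B ρB haccB hv hB hBeven
  have haccA' : AcceptingRun M (fun w => ρA (collapse u v w)) :=
    hpres (fun w => t (collapse u v w)) _ _ hRB' haccB' hRA' hguided'
  set bs : ℕ → Bool := fun n =>
    if n < u.length then u.getD n false else v.getD ((n - u.length) % v.length) false with hbs
  have hbs2 : ∀ i, bs (u.length + i) = v.getD (i % v.length) false := by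
    intro i
    rw [hbs]
    simp
  have hprefu : pref bs u.length = u := by
    apply pref_eq_of
    intro i hi
    rw [hbs]
    simp only [hi, if_pos]
    exact List.getD_eq_getElem u false hi
  have hW : ∀ i, collapse u v (pref bs (u.length + i)) = u ++ v.take (i % v.length) := by
    intro i
    induction i with
    | zero =>
      simp only [Nat.add_zero, hprefu, collapse_u hv, Nat.zero_mod, List.take_zero,
        List.append_nil]
    | succ i ih =>
      rw [show u.length + (i + 1) = (u.length + i) + 1 by ring, pref_succ,
        collapse_append hv, ih, hbs2 i, collapse_cycle_step hv (Nat.mod_lt i hm),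
        mod_succ_mod]
  have hparA : ParityAccepting (BranchPrio M (fun w => ρA (collapse u v w)) bs) := haccA' bs
  have hagree : ∀ j,
      (fun i => M.prio (ρA (u ++ v.take (i % v.length))) (v.getD (i % v.length) false)) (0 + j)
      = BranchPrio M (fun w => ρA (collapse u v w)) bs (u.length + j) := by
    intro j
    simp only [Nat.zero_add, BranchPrio]
    rw [hW j, hbs2 j]
  have hpar2 : ParityAccepting
      (fun i => M.prio (ρA (u ++ v.take (i % v.length))) (v.getD (i % v.length) false)) :=
    parity_shift (k := 0) (l := u.length) hagree hparA
  obtain ⟨V, hmV, hev⟩ := hpar2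
  have hVeq := maxInfRec_unique hmV
    (maxInfRec_periodic (fun j => M.prio (ρA (u ++ v.take j)) (v.getD j false)) v.length hm)
  rw [hVeq] at hev
  exact hev
end

section
/- In the J,N-priority transduction game over a parity graph, if from some point on every priority i chosen is at most some odd i*, i* is chosen infinitely often, and Eve only ever chooses registers of index at most j* (with j* chosen infinitely often), then the register r_{j*} takes the value i* at infinitely many steps where Eve chooses r_{j*}. -/
/-- Parameters of the `J,N`-priority transduction game: the output index
`J = [Jmin, Jmax]` (with `Jmin ∈ {1,2}`) and the counter bound `N`. -/
structure TransGame where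
  Jmin : ℕ
  Jmax : ℕ
  N : ℕ

/-- The game has a register `r_j` for each even `2j ∈ J`, plus `r_0` iff `1 ∈ J`. -/
def TransGame.IsReg (G : TransGame) (j : ℕ) : Prop :=
  (j = 0 ∧ G.Jmin = 1) ∨ (G.Jmin ≤ 2 * j ∧ 2 * j ≤ G.Jmax)

/-- A play of the `J,N`-priority transduction game over a fixed infinite path
with edge labels `ℓ` (an Adam-only parity graph): at step `n`, Eve chooses the
register `choice n` and (choice ♯) a priority `pick n ≥ ℓ n` of matching parity
constraint; `reg n j` and `cnt n i j` are the register and counter values before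
step `n` (registers initialised to `imin = min I`, counters to `0`), and
`out n` is the output priority produced at step `n`. Reaching the counter value
`N` (i.e. `N+1` counted choices) triggers the odd output `2j+1` and a reset. -/
structure TPlay (G : TransGame) (imin : ℕ) (ℓ : ℕ → ℕ) where
  choice : ℕ → ℕ
  pick : ℕ → ℕ
  reg : ℕ → ℕ → ℕ
  cnt : ℕ → ℕ → ℕ → ℕ
  out : ℕ → ℕ
  choice_isReg : ∀ n, G.IsReg (choice n)
  pick_even : ∀ n, Even (ℓ n) → pick n = ℓ n
  pick_odd : ∀ n, ¬ Even (ℓ n) → ¬ Even (pick n) ∧ ℓ n ≤ pick n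
  reg_init : ∀ j, reg 0 j = imin
  cnt_init : ∀ i j, cnt 0 i j = 0
  out_zero : ∀ n, choice n = 0 → out n = 1
  out_even : ∀ n, choice n ≠ 0 → Even (reg n (choice n)) → out n = 2 * choice n
  out_full : ∀ n, choice n ≠ 0 → ¬ Even (reg n (choice n)) →
      cnt n (reg n (choice n)) (choice n) = G.N → out n = 2 * choice n + 1
  out_incr : ∀ n, choice n ≠ 0 → ¬ Even (reg n (choice n)) →
      cnt n (reg n (choice n)) (choice n) ≠ G.N → out n = 2 * choice n
  reg_lt : ∀ n j, j < choice n → reg (n + 1) j = reg n j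
  reg_eq : ∀ n, reg (n + 1) (choice n) = pick n
  reg_gt : ∀ n j, choice n < j → reg (n + 1) j = max (pick n) (reg n j)
  cnt_upd : ∀ n i j,
    cnt (n + 1) i j =
      if i < pick n ∧ j = choice n then 0
      else if i = pick n ∧ j < choice n then 0
      else if i = reg n (choice n) ∧ j = choice n ∧ choice n ≠ 0 ∧
          ¬ Even (reg n (choice n)) then
        (if cnt n i j = G.N then 0 else cnt n i j + 1)
      else cnt n i j

/-- Eve wins a play iff no output ever leaves `J` (no instant loss) and the
output sequence is parity accepting. -/
def TPlay.EveWins {G : TransGame} {imin : ℕ} {ℓ : ℕ → ℕ} (p : TPlay G imin ℓ) : Prop :=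
  (∀ n, p.out n ∈ Finset.Icc G.Jmin G.Jmax) ∧ ParityAccepting p.out

/-- if eventually every chosen priority is at most the odd `i*`,
`i*` is chosen infinitely often, eventually every chosen register has index at
most `j*`, and `j*` is chosen infinitely often, then `r_{j*}` holds the value
`i*` at infinitely many steps at which Eve chooses `r_{j*}`. -/
theorem stmt10 (G : TransGame) (imin : ℕ) (ℓ : ℕ → ℕ) (p : TPlay G imin ℓ)
    (istar jstar n₀ : ℕ) (hodd : ¬ Even istar)
    (hile : ∀ n, n₀ ≤ n → p.pick n ≤ istar)
    (hiinf : ∀ n, ∃ m, n ≤ m ∧ p.pick m = istar)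
    (hjle : ∀ n, n₀ ≤ n → p.choice n ≤ jstar)
    (hjinf : ∀ n, ∃ m, n ≤ m ∧ p.choice m = jstar) :
    ∀ n, ∃ m, n ≤ m ∧ p.choice m = jstar ∧ p.reg m jstar = istar := by
  intro n
  obtain ⟨m₁, hm₁, hc₁⟩ := hjinf (max n n₀)
  have hm₁n₀ : n₀ ≤ m₁ := le_trans (le_max_right _ _) hm₁
  -- after m₁+1, register jstar stays ≤ istar
  have hbound : ∀ k, m₁ + 1 ≤ k → p.reg k jstar ≤ istar := by
    intro k hk
    induction k, hk using Nat.le_induction with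
    | base =>
      rw [← hc₁, p.reg_eq m₁]
      exact hile m₁ hm₁n₀
    | succ k hk ih =>
      have hkn₀ : n₀ ≤ k := le_trans hm₁n₀ (le_trans (Nat.le_succ _) hk)
      rcases lt_or_eq_of_le (hjle k hkn₀) with h | h
      · rw [p.reg_gt k jstar h]
        exact max_le (hile k hkn₀) ih
      · rw [← h, p.reg_eq k]
        exact hile k hkn₀
  obtain ⟨m₂, hm₂, hp₂⟩ := hiinf (m₁ + 1)
  have hm₂n₀ : n₀ ≤ m₂ := le_trans hm₁n₀ (le_trans (Nat.le_succ _) hm₂)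
  -- reg (m₂+1) jstar = istar
  have hreg2 : p.reg (m₂ + 1) jstar = istar := by
    rcases lt_or_eq_of_le (hjle m₂ hm₂n₀) with h | h
    · rw [p.reg_gt m₂ jstar h, hp₂]
      exact max_eq_left (hbound m₂ hm₂)
    · rw [← h, p.reg_eq m₂, hp₂]
  -- invariant after m₂+1
  have hinv : ∀ k, m₂ + 1 ≤ k →
      (∃ l, m₂ + 1 ≤ l ∧ l < k ∧ p.choice l = jstar ∧ p.reg l jstar = istar)
      ∨ p.reg k jstar = istar := by
    intro k hk
    induction k, hk using Nat.le_induction with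
    | base => exact Or.inr hreg2
    | succ k hk ih =>
      rcases ih with ⟨l, h1, h2, h3, h4⟩ | hr
      · exact Or.inl ⟨l, h1, lt_trans h2 (Nat.lt_succ_self _), h3, h4⟩
      · have hkn₀ : n₀ ≤ k := le_trans hm₂n₀ (le_trans (Nat.le_succ _) hk)
        rcases lt_or_eq_of_le (hjle k hkn₀) with h | h
        · refine Or.inr ?_
          rw [p.reg_gt k jstar h, hr]
          exact max_eq_right (hile k hkn₀)
        · exact Or.inl ⟨k, hk, Nat.lt_succ_self _, h, hr⟩
  obtain ⟨m₃, hm₃, hc₃⟩ := hjinf (m₂ + 1)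
  rcases hinv m₃ hm₃ with ⟨l, h1, _, h3, h4⟩ | hr
  · exact ⟨l, le_trans (le_max_left _ _) (le_trans hm₁ (le_trans (Nat.le_succ _)
      (le_trans hm₂ (le_trans (Nat.le_succ _) h1)))), h3, h4⟩
  · exact ⟨m₃, le_trans (le_max_left _ _) (le_trans hm₁ (le_trans (Nat.le_succ _)
      (le_trans hm₂ (le_trans (Nat.le_succ _) hm₃)))), hc₃, hr⟩
end
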